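/- arXiv:1802.02469 — 2 statements merged into one kernel-verified Lean document; each statement's English description precedes it below -/
import Mathlib

section
/- For every pure unit quaternion μ and all real numbers α and φ, there exists a unitary matrix U in U(2) over the complex numbers such that for all (z₁, z₂) ∈ ℂ², Φ(U·(z₁, z₂)) = exp(μ·α/2) · Φ(z₁, z₂) · exp(j·φ), where exp is the quaternion exponential. -/
open Quaternion MeasureTheory

noncomputable section

/-- The imaginary unit `i` of the quaternions. -/
def qi : ℍ[ℝ] := ⟨0, 1, 0, 0⟩

/-- The imaginary unit `j` of the quaternions. -/
def qj : ℍ[ℝ] := ⟨0, 0, 1, 0⟩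

/-- The embedding `ι : ℂ → ℍ` sending `a + b·√(−1)` to `a + b·j`. -/
def iotaC (z : ℂ) : ℍ[ℝ] := ⟨z.re, 0, z.im, 0⟩

/-- The identification `Φ : ℂ² → ℍ`, `Φ(z₁, z₂) = ι(z₁) + i·ι(z₂)`. -/
def PhiMap (z : Fin 2 → ℂ) : ℍ[ℝ] := iotaC (z 0) + qi * iotaC (z 1)

/-- A quaternion is a pure unit quaternion if its real part is `0` and its modulus is `1`. -/
def IsPureUnit (μ : ℍ[ℝ]) : Prop := μ.re = 0 ∧ ‖μ‖ = 1

/-- The quaternion exponential. -/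
def qexp (q : ℍ[ℝ]) : ℍ[ℝ] := NormedSpace.exp q

/-- The Euclidean inner product on `ℍ ≅ ℝ⁴`: `⟨p, q⟩` is the real part of `p·q̄`. -/
def qinner (p q : ℍ[ℝ]) : ℝ := (p * star q).re

/-- Exponential of a pure unit quaternion scaled by a real. -/
lemma qexp_pure (ν : ℍ[ℝ]) (h1 : ν.re = 0) (h2 : ‖ν‖ = 1) (t : ℝ) :
    qexp (ν * (t : ℍ[ℝ])) = ((Real.cos t : ℝ) : ℍ[ℝ]) + (Real.sin t) • ν := by
  have hre : (ν * (t : ℍ[ℝ])).re = 0 := by simp [h1]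
  have hnorm : ‖ν * (t : ℍ[ℝ])‖ = |t| := by
    rw [norm_mul, h2, one_mul, Quaternion.norm_coe, Real.norm_eq_abs]
  rw [qexp, Quaternion.exp_of_re_eq_zero _ hre, hnorm]
  have : (Real.sin |t| / |t|) • (ν * (t : ℍ[ℝ])) = Real.sin t • ν := by
    rcases lt_trichotomy t 0 with ht | ht | ht
    · rw [abs_of_neg ht, Real.sin_neg, Quaternion.mul_coe_eq_smul, smul_smul]
      congr 1
      field_simp
      rw [mul_div_assoc, div_self ht.ne, mul_one]
    · simp [ht]
    · rw [abs_of_pos ht, Quaternion.mul_coe_eq_smul, smul_smul]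
      congr 1
      field_simp
  rw [this]
  congr 1
  rw [Real.cos_abs]

/-- For every pure unit quaternion `μ` and reals `α`, `φ`, the map
`X ↦ exp(μ·α/2)·X·exp(j·φ)` on `ℍ ≅ ℂ²` is realized by some `U ∈ U(2)`. -/
theorem quaternion_to_unitary (μ : ℍ[ℝ]) (hμ : IsPureUnit μ) (α φ : ℝ) :
    ∃ U ∈ Matrix.unitaryGroup (Fin 2) ℂ,
      ∀ z : Fin 2 → ℂ,
        PhiMap (U.mulVec z) =
          qexp (μ * ((α / 2 : ℝ) : ℍ[ℝ])) * PhiMap z * qexp (qj * ((φ : ℝ) : ℍ[ℝ])) := by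
  obtain ⟨hre, hnorm⟩ := hμ
  have hsum : μ.imI ^ 2 + μ.imJ ^ 2 + μ.imK ^ 2 = 1 := by
    have h := Quaternion.normSq_eq_norm_mul_self μ
    rw [hnorm, mul_one, Quaternion.normSq_def'] at h
    rw [hre] at h
    nlinarith [h]
  have hqj : ‖qj‖ = 1 := by
    have h := Quaternion.normSq_eq_norm_mul_self qj
    have h2 : Quaternion.normSq qj = 1 := by
      rw [Quaternion.normSq_def']; simp [qj]
    rw [h2] at h
    nlinarith [norm_nonneg qj]
  have hp := qexp_pure μ hre hnorm (α / 2)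
  have hq := qexp_pure qj (by rfl) hqj φ
  set c := Real.cos (α / 2) with hc
  set s := Real.sin (α / 2) with hs
  set d := Real.cos φ with hd
  set e := Real.sin φ with he
  have hct : c ^ 2 + s ^ 2 = 1 := by
    rw [hc, hs]; exact Real.cos_sq_add_sin_sq _
  have hdt : d ^ 2 + e ^ 2 = 1 := by
    rw [hd, he]; exact Real.cos_sq_add_sin_sq _
  refine ⟨Matrix.of ![![⟨d, e⟩ * ⟨c, s * μ.imJ⟩, ⟨d, e⟩ * ⟨-(s * μ.imI), s * μ.imK⟩],
                      ![⟨d, e⟩ * ⟨s * μ.imI, s * μ.imK⟩, ⟨d, e⟩ * ⟨c, -(s * μ.imJ)⟩]], ?_, ?_⟩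
  · rw [Matrix.mem_unitaryGroup_iff']
    ext i j
    fin_cases i <;> fin_cases j <;>
      simp [Matrix.mul_apply, Fin.sum_univ_two, Matrix.one_apply, Complex.ext_iff,
        Complex.mul_re, Complex.mul_im] <;>
      constructor <;>
      first
        | ring1
        | linear_combination (c ^ 2 + s ^ 2 * (μ.imI ^ 2 + μ.imJ ^ 2 + μ.imK ^ 2)) * hdt +
            s ^ 2 * hsum + hct
  · intro z
    rw [hp, hq]
    ext <;>
      simp only [PhiMap, Quaternion.re_mul, Quaternion.imI_mul, Quaternion.imJ_mul,
        Quaternion.imK_mul, Quaternion.re_add, Quaternion.imI_add, Quaternion.imJ_add,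
        Quaternion.imK_add, Quaternion.re_smul, Quaternion.imI_smul, Quaternion.imJ_smul,
        Quaternion.imK_smul] <;>
      simp [PhiMap, iotaC, qi, qj, Matrix.mulVec, dotProduct, Fin.sum_univ_two,
        Matrix.vecHead, Matrix.vecTail, hre,
        Complex.mul_re, Complex.mul_im, Quaternion.re_mul] <;>
      ring1
end
end

section
/- Let H be a Hermitian positive semidefinite 2×2 complex matrix with eigenvalues λ₁ ≥ λ₂ ≥ 0. Then there exists a pure unit quaternion μ such that for all (z₁, z₂) ∈ ℂ², Φ(H·(z₁, z₂)) = ((λ₁ + λ₂)/2)·Φ(z₁, z₂) − ((λ₁ − λ₂)/2)·μ·Φ(z₁, z₂)·j; that is, in the Hermitian quaternion filter form Y = K·(X − η·μ·X·j) one can take homogeneous gain K = (λ₁ + λ₂)/2 and, when K > 0, polarizing power η = (λ₁ − λ₂)/(λ₁ + λ₂). -/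
open Quaternion MeasureTheory
open scoped ComplexOrder

noncomputable section

@[simp] lemma qi_re : qi.re = 0 := rfl
@[simp] lemma qi_imI : qi.imI = 1 := rfl
@[simp] lemma qi_imJ : qi.imJ = 0 := rfl
@[simp] lemma qi_imK : qi.imK = 0 := rfl
@[simp] lemma qj_re : qj.re = 0 := rfl
@[simp] lemma qj_imI : qj.imI = 0 := rfl
@[simp] lemma qj_imJ : qj.imJ = 1 := rfl
@[simp] lemma qj_imK : qj.imK = 0 := rfl
@[simp] lemma iotaC_re (z : ℂ) : (iotaC z).re = z.re := rfl
@[simp] lemma iotaC_imI (z : ℂ) : (iotaC z).imI = 0 := rfl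
@[simp] lemma iotaC_imJ (z : ℂ) : (iotaC z).imJ = z.im := rfl
@[simp] lemma iotaC_imK (z : ℂ) : (iotaC z).imK = 0 := rfl

lemma key_identity (H : Matrix (Fin 2) (Fin 2) ℂ) (q : ℍ[ℝ]) (K : ℝ)
    (h00 : (H 0 0).im = 0) (h11 : (H 1 1).im = 0)
    (h10 : H 1 0 = starRingEnd ℂ (H 0 1))
    (hK : K = ((H 0 0).re + (H 1 1).re) / 2)
    (hq0 : q.re = 0) (hq1 : q.imI = -(H 0 1).im)
    (hq2 : q.imJ = ((H 1 1).re - (H 0 0).re) / 2) (hq3 : q.imK = -(H 0 1).re)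
    (z : Fin 2 → ℂ) :
    PhiMap (H.mulVec z) = (K : ℍ[ℝ]) * PhiMap z + q * PhiMap z * qj := by
  have hm0 : H.mulVec z 0 = H 0 0 * z 0 + H 0 1 * z 1 := by
    simp [Matrix.mulVec, dotProduct, Fin.sum_univ_two]
  have hm1 : H.mulVec z 1 = H 1 0 * z 0 + H 1 1 * z 1 := by
    simp [Matrix.mulVec, dotProduct, Fin.sum_univ_two]
  apply Quaternion.ext <;>
    simp [PhiMap, hm0, hm1, h10, h00, h11, hq0, hq1, hq2, hq3,
      Quaternion.re_coe, Quaternion.imI_coe, Quaternion.imJ_coe,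
      Quaternion.imK_coe, Quaternion.re_mul, Quaternion.imI_mul, Quaternion.imJ_mul,
      Quaternion.imK_mul, Quaternion.re_add, Quaternion.imI_add, Quaternion.imJ_add,
      Quaternion.imK_add,
      Complex.add_re, Complex.add_im, Complex.mul_re, Complex.mul_im] <;>
    (try rw [hK]) <;> ring

set_option maxHeartbeats 1600000 in
/-- A Hermitian PSD matrix with eigenvalues `λ₁ ≥ λ₂ ≥ 0` acts on `ℍ ≅ ℂ²` as
`X ↦ ((λ₁+λ₂)/2)·X − ((λ₁−λ₂)/2)·μ·X·j` for some pure unit quaternion `μ`,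
i.e. with homogeneous gain `K = (λ₁+λ₂)/2` and polarizing power `η = (λ₁−λ₂)/(λ₁+λ₂)`. -/
theorem hermitian_eigenvalue_parameters (H : Matrix (Fin 2) (Fin 2) ℂ) (hH : H.PosSemidef)
    (lam₁ lam₂ : ℝ) (hle : lam₂ ≤ lam₁) (h0 : 0 ≤ lam₂)
    (heig : ({lam₁, lam₂} : Multiset ℝ) = Finset.univ.val.map hH.1.eigenvalues) :
    ∃ μ : ℍ[ℝ], IsPureUnit μ ∧
      ∀ z : Fin 2 → ℂ,
        PhiMap (H.mulVec z) =
          (((lam₁ + lam₂) / 2 : ℝ) : ℍ[ℝ]) * PhiMap z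
            - (((lam₁ - lam₂) / 2 : ℝ) : ℍ[ℝ]) * (μ * PhiMap z * qj) := by
  have hHerm := hH.1
  have h00 : (H 0 0).im = 0 := by
    have h := hHerm.apply 0 0
    rw [← Complex.conj_eq_iff_im]
    exact h
  have h11 : (H 1 1).im = 0 := by
    have h := hHerm.apply 1 1
    rw [← Complex.conj_eq_iff_im]
    exact h
  have h10 : H 1 0 = starRingEnd ℂ (H 0 1) := (hHerm.apply 1 0).symm
  set a : ℝ := (H 0 0).re with ha
  set c : ℝ := (H 1 1).re with hc
  set br : ℝ := (H 0 1).re with hbr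
  set bi : ℝ := (H 0 1).im with hbi
  -- trace and determinant in terms of eigenvalues
  have htr : H.trace = ∑ i, (hHerm.eigenvalues i : ℂ) := by
    conv_lhs => rw [hHerm.spectral_theorem, Unitary.conjStarAlgAut_apply]
    rw [Matrix.trace_mul_cycle]
    rw [Unitary.coe_star_mul_self, one_mul, Matrix.trace_diagonal]
    simp
  have hsum : lam₁ + lam₂ = ∑ i, hHerm.eigenvalues i := by
    have h := congrArg Multiset.sum heig
    simpa [Finset.sum] using h
  have hprod : lam₁ * lam₂ = ∏ i, hHerm.eigenvalues i := by
    have h := congrArg Multiset.prod heig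
    simpa [Finset.prod] using h
  have hTr2 : H 0 0 + H 1 1 = ((lam₁ + lam₂ : ℝ) : ℂ) := by
    rw [← Matrix.trace_fin_two, htr, hsum]
    push_cast
    ring
  have hptrace : a + c = lam₁ + lam₂ := by
    have := congrArg Complex.re hTr2
    simpa [ha, hc] using this
  have hDet2 : H 0 0 * H 1 1 - H 0 1 * H 1 0 = ((lam₁ * lam₂ : ℝ) : ℂ) := by
    rw [← Matrix.det_fin_two, hHerm.det_eq_prod_eigenvalues, hprod]
    push_cast
    simp [Fin.prod_univ_two]
  have hpdet : a * c - (br ^ 2 + bi ^ 2) = lam₁ * lam₂ := by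
    have := congrArg Complex.re hDet2
    simp [Complex.sub_re, Complex.mul_re, h00, h11, h10, Complex.conj_re, Complex.conj_im,
      ← ha, ← hc, ← hbr, ← hbi] at this
    nlinarith [this]
  set d : ℝ := (lam₁ - lam₂) / 2 with hd
  have hd0 : 0 ≤ d := by simp [hd]; linarith
  obtain ⟨q, hq0, hq1, hq2, hq3⟩ :
      ∃ q : ℍ[ℝ], q.re = 0 ∧ q.imI = -bi ∧ q.imJ = (c - a) / 2 ∧ q.imK = -br :=
    ⟨⟨0, -bi, (c - a) / 2, -br⟩, rfl, rfl, rfl, rfl⟩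
  have hnormSq : Quaternion.normSq q = d ^ 2 := by
    rw [Quaternion.normSq_def', hq0, hq1, hq2, hq3]
    nlinarith [hptrace, hpdet]
  have hnormq : ‖q‖ = d := by
    have h1 : Quaternion.normSq q = ‖q‖ * ‖q‖ := Quaternion.normSq_eq_norm_mul_self q
    nlinarith [norm_nonneg q, hnormSq]
  have hK : (lam₁ + lam₂) / 2 = (a + c) / 2 := by linarith
  rcases eq_or_lt_of_le hd0 with hdz | hdpos
  · -- degenerate case: d = 0, q = 0
    have hqz : q = 0 := by
      have : ‖q‖ = 0 := by rw [hnormq, ← hdz]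
      exact norm_eq_zero.mp this
    refine ⟨qi, ⟨rfl, ?_⟩, fun z => ?_⟩
    · have h1 : Quaternion.normSq qi = ‖qi‖ * ‖qi‖ := Quaternion.normSq_eq_norm_mul_self qi
      have h2 : Quaternion.normSq qi = 1 := by rw [Quaternion.normSq_def']; simp [qi]
      nlinarith [norm_nonneg qi]
    · have hkey := key_identity H q ((lam₁ + lam₂) / 2) h00 h11 h10 hK hq0 hq1 hq2 hq3 z
      rw [hkey, hqz]
      have : (((lam₁ - lam₂) / 2 : ℝ) : ℍ[ℝ]) = 0 := by
        have : (lam₁ - lam₂) / 2 = 0 := hdz.symm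
        rw [this]; exact QuaternionAlgebra.coe_zero
      rw [this]
      simp
  · -- nondegenerate case
    set μ : ℍ[ℝ] := d⁻¹ • (-q) with hμdef
    have hdne : d ≠ 0 := ne_of_gt hdpos
    have hdsmul : d • μ = -q := by
      rw [hμdef, smul_smul, mul_inv_cancel₀ hdne, one_smul]
    refine ⟨μ, ⟨?_, ?_⟩, fun z => ?_⟩
    · simp [hμdef, hq0]
    · rw [hμdef, norm_smul, norm_neg, hnormq]
      simp [abs_of_pos hdpos, inv_mul_cancel₀ hdne]
    · have hkey := key_identity H q ((lam₁ + lam₂) / 2) h00 h11 h10 hK hq0 hq1 hq2 hq3 z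
      rw [hkey]
      have hsm : (((lam₁ - lam₂) / 2 : ℝ) : ℍ[ℝ]) * (μ * PhiMap z * qj)
          = -q * PhiMap z * qj := by
        rw [← hd, Quaternion.coe_mul_eq_smul, hμdef, smul_mul_assoc, smul_mul_assoc,
          smul_smul, mul_inv_cancel₀ hdne, one_smul]
      rw [hsm, neg_mul, neg_mul, sub_neg_eq_add]
end
end
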